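/- arXiv:2601.14818 — 3 statements merged into one kernel-verified Lean document; each statement's English description precedes it below -/
import Mathlib

section
/- With the white noise mapping W of N(0,Q) as above, for all h₁, h₂ in the range of Q^{1/2}, ‖exp(i W_{h₁}(·)) - exp(i W_{h₂}(·))‖²_{L²(H,N(0,Q);ℂ)} = 2 - 2 exp(-½ ‖h₁ - h₂‖²_H). Consequently the map h ↦ exp(i W_h(·)) from H to L²(H, N(0,Q); ℂ) is continuous. -/
open MeasureTheory
open scoped RealInnerProductSpace

lemma norm_exp_I_sub_exp_I (a b : ℝ) :
    ‖Complex.exp (Complex.I * a) - Complex.exp (Complex.I * b)‖ ^ 2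
      = 2 - 2 * Real.cos (a - b) := by
  rw [mul_comm Complex.I (a : ℂ), mul_comm Complex.I (b : ℂ)]
  have : ‖Complex.exp (↑a * Complex.I) - Complex.exp (↑b * Complex.I)‖ ^ 2
      = Complex.normSq (Complex.exp (↑a * Complex.I) - Complex.exp (↑b * Complex.I)) := by
    rw [← Complex.sq_norm]
  rw [this, Complex.normSq_apply, Complex.sub_re, Complex.sub_im,
    Complex.exp_ofReal_mul_I_re, Complex.exp_ofReal_mul_I_im,
    Complex.exp_ofReal_mul_I_re, Complex.exp_ofReal_mul_I_im, Real.cos_sub]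
  have ha := Real.sin_sq_add_cos_sq a
  have hb := Real.sin_sq_add_cos_sq b
  ring_nf
  nlinarith

set_option maxHeartbeats 1000000 in
/-- For `h₁, h₂` in the range of `Q^{1/2}`,
`‖exp(iW_{h₁}) - exp(iW_{h₂})‖²_{L²} = 2 - 2 exp(-½‖h₁-h₂‖²)`; consequently
`h ↦ exp(i W_h(·))` is continuous from `H` into `L²(H, N(0,Q); ℂ)`. -/
theorem stmt_7
    {H : Type*} [NormedAddCommGroup H] [InnerProductSpace ℝ H] [CompleteSpace H]
    [TopologicalSpace.SeparableSpace H] [MeasurableSpace H] [BorelSpace H]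
    (Q R : H →L[ℝ] H)
    (hQsa : IsSelfAdjoint Q)
    (hQpos : ∀ x : H, 0 ≤ ⟪x, Q x⟫)
    (hQtrace : ∃ (ι : Type) (b : HilbertBasis ι ℝ H), Summable fun i => ⟪b i, Q (b i)⟫)
    (hQker : LinearMap.ker (Q : H →ₗ[ℝ] H) = ⊥)
    (hRsa : IsSelfAdjoint R)
    (hRpos : ∀ x : H, 0 ≤ ⟪x, R x⟫)
    (hRR : ∀ x : H, R (R x) = Q x)
    (μ : Measure H) [IsProbabilityMeasure μ]
    (hFourier : ∀ u : H,
      ∫ x, Complex.exp (Complex.I * (⟪u, x⟫ : ℝ)) ∂μ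
        = Complex.exp (-((⟪Q u, u⟫ : ℝ) : ℂ) / 2))
    (W : H → H → ℝ)
    (hWmem : ∀ h : H, MemLp (W h) 2 μ)
    (hWlin : ∀ (a : ℝ) (h₁ h₂ : H),
      (fun x => W (a • h₁ + h₂) x) =ᵐ[μ] fun x => a * W h₁ x + W h₂ x)
    (hWiso : ∀ h₁ h₂ : H, ∫ x, (W h₁ x - W h₂ x) ^ 2 ∂μ = ‖h₁ - h₂‖ ^ 2)
    (hWrange : ∀ h₀ : H, (fun x => W (R h₀) x) =ᵐ[μ] fun x => ⟪h₀, x⟫) :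
    (∀ u v : H,
      ∫ x, ‖Complex.exp (Complex.I * (W (R u) x : ℝ))
              - Complex.exp (Complex.I * (W (R v) x : ℝ))‖ ^ 2 ∂μ
        = 2 - 2 * Real.exp (-‖R u - R v‖ ^ 2 / 2)) ∧
    ∀ h : H, ∀ ε > (0 : ℝ), ∃ δ > (0 : ℝ), ∀ h' : H, ‖h - h'‖ < δ →
      ∫ x, ‖Complex.exp (Complex.I * (W h x : ℝ))
              - Complex.exp (Complex.I * (W h' x : ℝ))‖ ^ 2 ∂μ < ε := by
  -- a.e. strong measurability of the squared-norm integrand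
  have hmeasW : ∀ h : H, AEStronglyMeasurable (W h) μ := fun h => (hWmem h).aestronglyMeasurable
  have hnormInt : ∀ h h' : H,
      Integrable (fun x => ‖Complex.exp (Complex.I * (W h x : ℝ))
        - Complex.exp (Complex.I * (W h' x : ℝ))‖ ^ 2) μ := by
    intro h h'
    have hm : AEStronglyMeasurable (fun x => ‖Complex.exp (Complex.I * (W h x : ℝ))
        - Complex.exp (Complex.I * (W h' x : ℝ))‖ ^ 2) μ := by
      have c1 : Continuous fun t : ℝ => Complex.exp (Complex.I * (t : ℂ)) :=
        Complex.continuous_exp.comp (continuous_const.mul Complex.continuous_ofReal)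
      have m1 : AEStronglyMeasurable (fun x => Complex.exp (Complex.I * (W h x : ℝ))) μ :=
        c1.comp_aestronglyMeasurable (hmeasW h)
      have m2 : AEStronglyMeasurable (fun x => Complex.exp (Complex.I * (W h' x : ℝ))) μ :=
        c1.comp_aestronglyMeasurable (hmeasW h')
      exact ((m1.sub m2).norm).pow 2
    refine (integrable_const (4 : ℝ)).mono' hm ?_
    filter_upwards with x
    have h1 : ‖Complex.exp (Complex.I * (W h x : ℝ))‖ = 1 := by
      rw [mul_comm]; exact Complex.norm_exp_ofReal_mul_I _
    have h2 : ‖Complex.exp (Complex.I * (W h' x : ℝ))‖ = 1 := by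
      rw [mul_comm]; exact Complex.norm_exp_ofReal_mul_I _
    have := norm_sub_le (Complex.exp (Complex.I * (W h x : ℝ)))
      (Complex.exp (Complex.I * (W h' x : ℝ)))
    rw [Real.norm_eq_abs, abs_of_nonneg (by positivity)]
    nlinarith [norm_nonneg (Complex.exp (Complex.I * (W h x : ℝ))
      - Complex.exp (Complex.I * (W h' x : ℝ)))]
  constructor
  · intro u v
    set w : H := u - v with hw
    -- a.e., W (R u) x - W (R v) x = ⟪w, x⟫
    have hae : (fun x => W (R u) x - W (R v) x) =ᵐ[μ] fun x => ⟪w, x⟫ := by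
      have h1 := hWlin (-1) (R v) (R u)
      have h2 : ((-1 : ℝ) • R v + R u) = R w := by
        simp [hw, map_sub]; abel
      rw [h2] at h1
      have h3 := hWrange w
      filter_upwards [h1, h3] with x h1 h3
      rw [← h3, h1]; ring
    -- integrability of cos ⟪w, x⟫
    have hcosInt : Integrable (fun x => Real.cos ⟪w, x⟫) μ := by
      refine (integrable_const (1 : ℝ)).mono'
        ((Real.continuous_cos.comp (continuous_const.inner continuous_id)).aestronglyMeasurable) ?_
      filter_upwards with x
      rw [Real.norm_eq_abs]; exact Real.abs_cos_le_one _
    -- the Fourier computation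
    have hexpInt : Integrable (fun x => Complex.exp (Complex.I * (⟪w, x⟫ : ℝ))) μ := by
      refine (integrable_const (1 : ℝ)).mono' ?_ ?_
      · exact (Complex.continuous_exp.comp
          (continuous_const.mul (Complex.continuous_ofReal.comp
            (continuous_const.inner continuous_id)))).aestronglyMeasurable
      · filter_upwards with x
        rw [mul_comm]
        simp [Complex.norm_exp_ofReal_mul_I]
    have hQw : ⟪Q w, w⟫ = ‖R u - R v‖ ^ 2 := by
      have : R u - R v = R w := by rw [hw, map_sub]
      have hsym : ⟪R (R w), w⟫ = ⟪R w, R w⟫ := hRsa.isSymmetric (R w) w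
      rw [this, ← hRR w, hsym, real_inner_self_eq_norm_sq]
    have hcos : ∫ x, Real.cos ⟪w, x⟫ ∂μ = Real.exp (-‖R u - R v‖ ^ 2 / 2) := by
      have hre := integral_re (𝕜 := ℂ) hexpInt
      have hrw : ∀ x : H, RCLike.re (Complex.exp (Complex.I * (⟪w, x⟫ : ℝ))) = Real.cos ⟪w, x⟫ := by
        intro x
        rw [mul_comm]
        exact Complex.exp_ofReal_mul_I_re _
      simp only [hrw] at hre
      rw [hre, hFourier w, hQw]
      have hcast : -((‖R u - R v‖ ^ 2 : ℝ) : ℂ) / 2 = ((-‖R u - R v‖ ^ 2 / 2 : ℝ) : ℂ) := by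
        push_cast; ring
      rw [hcast]; exact Complex.exp_ofReal_re _
    calc ∫ x, ‖Complex.exp (Complex.I * (W (R u) x : ℝ))
              - Complex.exp (Complex.I * (W (R v) x : ℝ))‖ ^ 2 ∂μ
        = ∫ x, (2 - 2 * Real.cos ⟪w, x⟫) ∂μ := by
          refine integral_congr_ae ?_
          filter_upwards [hae] with x hx
          rw [norm_exp_I_sub_exp_I, hx]
      _ = 2 - 2 * Real.exp (-‖R u - R v‖ ^ 2 / 2) := by
          rw [integral_sub (integrable_const 2) (hcosInt.const_mul 2),
            integral_const, integral_const_mul, hcos]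
          simp
  · intro h ε hε
    refine ⟨Real.sqrt ε, Real.sqrt_pos.mpr hε, fun h' hd => ?_⟩
    have hWInt : Integrable (fun x => (W h x - W h' x) ^ 2) μ :=
      ((hWmem h).sub (hWmem h')).integrable_sq
    have hle : ∫ x, ‖Complex.exp (Complex.I * (W h x : ℝ))
              - Complex.exp (Complex.I * (W h' x : ℝ))‖ ^ 2 ∂μ
        ≤ ∫ x, (W h x - W h' x) ^ 2 ∂μ := by
      refine integral_mono (hnormInt h h') hWInt fun x => ?_
      rw [norm_exp_I_sub_exp_I]
      have := Real.one_sub_sq_div_two_le_cos (x := W h x - W h' x)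
      nlinarith
    have : ‖h - h'‖ ^ 2 < ε := by
      have h1 : ‖h - h'‖ ^ 2 < Real.sqrt ε ^ 2 := by
        apply pow_lt_pow_left₀ hd (norm_nonneg _)
        norm_num
      rwa [Real.sq_sqrt hε.le] at h1
    calc _ ≤ ∫ x, (W h x - W h' x) ^ 2 ∂μ := hle
      _ = ‖h - h'‖ ^ 2 := hWiso h h'
      _ < ε := this
end

section
/- Let H be a separable real Hilbert space, Q ∈ L₁⁺(H) with ker(Q)={0}, γ > 0, and W the white noise mapping of N(0,Q). Then for all x, x' ∈ H, exp(-‖x - x'‖²_H/γ²) = ⟨exp(i√2/γ · W_{x'}(·)), exp(i√2/γ · W_x(·))⟩ in L²(H, N(0,Q); ℂ), where the inner product is ∫ f ḡ dN(0,Q). Hence L²(H, N(0,Q); ℂ) is a (complex) feature space for the Gaussian kernel k_γ on H, with feature map x ↦ exp(i√2/γ · W_x(·)). -/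
open MeasureTheory
open scoped RealInnerProductSpace

lemma exp_I_sub_one (θ : ℝ) : ‖Complex.exp (Complex.I * θ) - 1‖ ≤ |θ| := by
  have h3 : ‖Complex.exp (Complex.I * θ) - 1‖ ^ 2 = 2 - 2 * Real.cos θ := by
    rw [mul_comm, Complex.exp_mul_I, Complex.sq_norm,
      Complex.normSq_apply]
    simp [Complex.cos_ofReal_re, Complex.sin_ofReal_re, Complex.cos_ofReal_im,
      Complex.sin_ofReal_im]
    nlinarith [Real.sin_sq_add_cos_sq θ]
  have h4 : ‖Complex.exp (Complex.I * θ) - 1‖ ^ 2 ≤ θ ^ 2 := by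
    rw [h3]; nlinarith [Real.one_sub_sq_div_two_le_cos (x := θ)]
  nlinarith [norm_nonneg (Complex.exp (Complex.I * θ) - 1), abs_nonneg θ, sq_abs θ]

lemma exp_I_lip (a b : ℝ) :
    ‖Complex.exp (Complex.I * a) - Complex.exp (Complex.I * b)‖ ≤ |a - b| := by
  have h1 : Complex.exp (Complex.I * a) - Complex.exp (Complex.I * b)
      = Complex.exp (Complex.I * b) * (Complex.exp (Complex.I * ((a - b : ℝ) : ℂ)) - 1) := by
    rw [mul_sub, ← Complex.exp_add]; push_cast; ring_nf
  rw [h1, norm_mul, mul_comm Complex.I ((b : ℂ)), Complex.norm_exp_ofReal_mul_I, one_mul]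
  exact exp_I_sub_one (a - b)

/-- L¹ bound by the L² norm on a probability space. -/
lemma abs_integral_le_sqrt_integral_sq {α : Type*} [MeasurableSpace α]
    (μ : Measure α) [IsProbabilityMeasure μ] (g : α → ℝ) (hg : MemLp g 2 μ) :
    ∫ z, |g z| ∂μ ≤ Real.sqrt (∫ z, (g z) ^ 2 ∂μ) := by
  have hpq : (2 : ℝ).HolderConjugate 2 := Real.HolderConjugate.two_two
  have hg2 : MemLp (fun z => |g z|) (ENNReal.ofReal 2) μ := by
    have : ENNReal.ofReal 2 = 2 := by norm_num
    rw [this]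
    exact hg.abs
  have h1 : MemLp (fun _ : α => (1 : ℝ)) (ENNReal.ofReal 2) μ := memLp_const 1
  have key := integral_mul_le_Lp_mul_Lq_of_nonneg hpq
    (f := fun z => |g z|) (g := fun _ => (1 : ℝ))
    (Filter.Eventually.of_forall fun z => abs_nonneg _)
    (Filter.Eventually.of_forall fun z => zero_le_one) hg2 h1
  simp only [mul_one, Real.one_rpow, integral_const, measure_univ, probReal_univ, ENNReal.toReal_one,
    one_smul, smul_eq_mul, one_mul] at key
  have habs : (∫ z, |g z| ^ (2 : ℝ) ∂μ) = ∫ z, (g z) ^ 2 ∂μ := by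
    refine integral_congr_ae (Filter.Eventually.of_forall fun z => ?_)
    show |g z| ^ (2 : ℝ) = g z ^ 2
    rw [show ((2:ℝ)) = ((2:ℕ):ℝ) by norm_num, Real.rpow_natCast, sq_abs]
  rw [habs] at key
  calc ∫ z, |g z| ∂μ ≤ (∫ z, (g z) ^ 2 ∂μ) ^ (1 / (2:ℝ)) := key
    _ = Real.sqrt (∫ z, (g z) ^ 2 ∂μ) := (Real.sqrt_eq_rpow _).symm

/-- `L²(H, N(0,Q); ℂ)` is a complex feature space for the Gaussian kernel `k_γ` on a
separable real Hilbert space `H`, with feature map `x ↦ exp(i √2/γ · W_x(·))`: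
`exp(-‖x-x'‖²/γ²) = ⟨exp(i√2/γ W_{x'}), exp(i√2/γ W_x)⟩ = ∫ Φ(x) ·  conj(Φ(x')) dN(0,Q)`. -/
theorem stmt_8
    {H : Type*} [NormedAddCommGroup H] [InnerProductSpace ℝ H] [CompleteSpace H]
    [TopologicalSpace.SeparableSpace H] [MeasurableSpace H] [BorelSpace H]
    (Q R : H →L[ℝ] H)
    (hQsa : IsSelfAdjoint Q)
    (hQpos : ∀ x : H, 0 ≤ ⟪x, Q x⟫)
    (hQtrace : ∃ (ι : Type) (b : HilbertBasis ι ℝ H), Summable fun i => ⟪b i, Q (b i)⟫)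
    (hQker : LinearMap.ker (Q : H →ₗ[ℝ] H) = ⊥)
    (hRsa : IsSelfAdjoint R)
    (hRpos : ∀ x : H, 0 ≤ ⟪x, R x⟫)
    (hRR : ∀ x : H, R (R x) = Q x)
    (μ : Measure H) [IsProbabilityMeasure μ]
    (hFourier : ∀ u : H,
      ∫ x, Complex.exp (Complex.I * (⟪u, x⟫ : ℝ)) ∂μ
        = Complex.exp (-((⟪Q u, u⟫ : ℝ) : ℂ) / 2))
    (W : H → H → ℝ)
    (hWmem : ∀ h : H, MemLp (W h) 2 μ)
    (hWlin : ∀ (a : ℝ) (h₁ h₂ : H),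
      (fun x => W (a • h₁ + h₂) x) =ᵐ[μ] fun x => a * W h₁ x + W h₂ x)
    (hWiso : ∀ h₁ h₂ : H, ∫ x, (W h₁ x - W h₂ x) ^ 2 ∂μ = ‖h₁ - h₂‖ ^ 2)
    (hWrange : ∀ h₀ : H, (fun x => W (R h₀) x) =ᵐ[μ] fun x => ⟪h₀, x⟫)
    (γ : ℝ) (hγ : 0 < γ) :
    ∀ x x' : H,
      (Real.exp (-‖x - x'‖ ^ 2 / γ ^ 2) : ℂ)
        = ∫ z, Complex.exp (Complex.I * ((Real.sqrt 2 / γ : ℝ) : ℂ) * (W x z : ℝ))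
            * (starRingEnd ℂ)
                (Complex.exp (Complex.I * ((Real.sqrt 2 / γ : ℝ) : ℂ) * (W x' z : ℝ))) ∂μ := by
  -- measurability and integrability of the feature functions
  have hmeas : ∀ h : H, AEStronglyMeasurable
      (fun z => Complex.exp (Complex.I * (W h z : ℝ))) μ := fun h => by
    exact (Complex.continuous_exp.comp
      (continuous_const.mul Complex.continuous_ofReal)).comp_aestronglyMeasurable
      (hWmem h).aestronglyMeasurable
  have hnorm1 : ∀ (t : ℝ), ‖Complex.exp (Complex.I * (t : ℂ))‖ = 1 := fun t => by
    rw [mul_comm]; exact Complex.norm_exp_ofReal_mul_I t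
  have hint : ∀ h : H, Integrable (fun z => Complex.exp (Complex.I * (W h z : ℝ))) μ :=
    fun h => by
      refine Integrable.mono' (integrable_const 1) (hmeas h)
        (Filter.Eventually.of_forall fun z => ?_)
      rw [hnorm1]
  -- density of the range of R
  have hRsym : ∀ u v : H, ⟪R u, v⟫ = ⟪u, R v⟫ := fun u v => hRsa.isSymmetric u v
  set S : Submodule ℝ H := LinearMap.range (R : H →ₗ[ℝ] H) with hS
  have hSbot : Sᗮ = ⊥ := by
    rw [Submodule.eq_bot_iff]
    intro v hv
    have hRv : R v = 0 := by
      have h0 : ⟪R v, R v⟫ = 0 := by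
        have := hv (R (R v)) ⟨R v, rfl⟩
        rwa [hRsym] at this
      exact inner_self_eq_zero.mp h0
    have hQv : Q v = 0 := by rw [← hRR, hRv, map_zero]
    have : v ∈ LinearMap.ker (Q : H →ₗ[ℝ] H) := hQv
    rw [hQker] at this
    exact this
  have hdense : Dense (S : Set H) := by
    have h1 : S.topologicalClosure = ⊤ := by
      rw [← Submodule.orthogonal_orthogonal_eq_closure, hSbot, Submodule.bot_orthogonal_eq_top]
    intro x
    have : x ∈ S.topologicalClosure := h1 ▸ Submodule.mem_top
    exact this
  -- the characteristic function of W h for h in the range of R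
  have hchar : ∀ u : H, ∫ z, Complex.exp (Complex.I * (W (R u) z : ℝ)) ∂μ
      = Complex.exp (-((‖R u‖ ^ 2 : ℝ) : ℂ) / 2) := by
    intro u
    have h1 : ∫ z, Complex.exp (Complex.I * (W (R u) z : ℝ)) ∂μ
        = ∫ z, Complex.exp (Complex.I * (⟪u, z⟫ : ℝ)) ∂μ := by
      refine integral_congr_ae ?_
      filter_upwards [hWrange u] with z hz
      rw [hz]
    have h2 : ⟪Q u, u⟫ = ‖R u‖ ^ 2 := by
      rw [← hRR, hRsym, real_inner_self_eq_norm_sq]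
    rw [h1, hFourier u, h2]
  -- the characteristic function of W h for every h, by density
  have key : ∀ h : H, ∫ z, Complex.exp (Complex.I * (W h z : ℝ)) ∂μ
      = Complex.exp (-((‖h‖ ^ 2 : ℝ) : ℂ) / 2) := by
    intro h
    obtain ⟨y, hyS, hy⟩ := mem_closure_iff_seq_limit.mp (hdense h)
    -- the integrals converge
    have hest : ∀ n : ℕ, ‖(∫ z, Complex.exp (Complex.I * (W (y n) z : ℝ)) ∂μ)
        - ∫ z, Complex.exp (Complex.I * (W h z : ℝ)) ∂μ‖ ≤ ‖y n - h‖ := by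
      intro n
      rw [← integral_sub (hint (y n)) (hint h)]
      calc ‖∫ z, (Complex.exp (Complex.I * (W (y n) z : ℝ))
              - Complex.exp (Complex.I * (W h z : ℝ))) ∂μ‖
          ≤ ∫ z, ‖Complex.exp (Complex.I * (W (y n) z : ℝ))
              - Complex.exp (Complex.I * (W h z : ℝ))‖ ∂μ := norm_integral_le_integral_norm _
        _ ≤ ∫ z, |W (y n) z - W h z| ∂μ := by
            refine integral_mono_of_nonneg (Filter.Eventually.of_forall fun z => norm_nonneg _)
              ?_ (Filter.Eventually.of_forall fun z => exp_I_lip _ _)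
            exact (((hWmem (y n)).sub (hWmem h)).mono_exponent (by norm_num)).integrable
              (le_refl 1) |>.abs
        _ ≤ Real.sqrt (∫ z, (W (y n) z - W h z) ^ 2 ∂μ) :=
            abs_integral_le_sqrt_integral_sq μ _ ((hWmem (y n)).sub (hWmem h))
        _ = ‖y n - h‖ := by rw [hWiso, Real.sqrt_sq (norm_nonneg _)]
    have hlim1 : Filter.Tendsto (fun n => ∫ z, Complex.exp (Complex.I * (W (y n) z : ℝ)) ∂μ)
        Filter.atTop (nhds (∫ z, Complex.exp (Complex.I * (W h z : ℝ)) ∂μ)) := by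
      rw [tendsto_iff_norm_sub_tendsto_zero]
      refine squeeze_zero (fun n => norm_nonneg _) hest ?_
      have : Filter.Tendsto (fun n => y n - h) Filter.atTop (nhds 0) := by
        simpa using hy.sub_const h
      simpa using this.norm
    -- the explicit values converge
    have hlim2 : Filter.Tendsto (fun n => ∫ z, Complex.exp (Complex.I * (W (y n) z : ℝ)) ∂μ)
        Filter.atTop (nhds (Complex.exp (-((‖h‖ ^ 2 : ℝ) : ℂ) / 2))) := by
      have heq : ∀ n : ℕ, ∫ z, Complex.exp (Complex.I * (W (y n) z : ℝ)) ∂μ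
          = Complex.exp (-((‖y n‖ ^ 2 : ℝ) : ℂ) / 2) := by
        intro n
        obtain ⟨u, hu⟩ := hyS n
        rw [← hu]; exact hchar u
      rw [show (fun n => ∫ z, Complex.exp (Complex.I * (W (y n) z : ℝ)) ∂μ)
          = fun n => Complex.exp (-((‖y n‖ ^ 2 : ℝ) : ℂ) / 2) from funext heq]
      have hcont : Continuous (fun v : H => Complex.exp (-((‖v‖ ^ 2 : ℝ) : ℂ) / 2)) :=
        Complex.continuous_exp.comp
          (((Complex.continuous_ofReal.comp ((continuous_norm).pow 2)).neg).div_const 2)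
      exact (hcont.tendsto h).comp hy
    exact tendsto_nhds_unique hlim1 hlim2
  -- main computation
  intro x x'
  set c : ℝ := Real.sqrt 2 / γ with hc
  have hc0 : 0 ≤ c := div_nonneg (Real.sqrt_nonneg 2) hγ.le
  -- a.e. linearity facts
  have h0 : (fun z => W 0 z) =ᵐ[μ] fun _ => (0 : ℝ) := by
    have := hWlin 1 0 0
    simp only [one_smul, add_zero, one_mul] at this
    filter_upwards [this] with z hz
    linarith
  have h1 : (fun z => W (x - x') z) =ᵐ[μ] fun z => W x z - W x' z := by
    have := hWlin (-1) x' x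
    have he : (-1 : ℝ) • x' + x = x - x' := by
      rw [neg_one_smul, sub_eq_neg_add]
    rw [he] at this
    filter_upwards [this] with z hz
    rw [hz]; ring
  have h2 : (fun z => W (c • (x - x')) z) =ᵐ[μ] fun z => c * (W x z - W x' z) := by
    have := hWlin c (x - x') 0
    rw [add_zero] at this
    filter_upwards [this, h0, h1] with z hz hz0 hz1
    rw [hz, hz0, hz1]; ring
  -- rewrite the integrand
  have hintegrand : (fun z => Complex.exp (Complex.I * ((c : ℝ) : ℂ) * (W x z : ℝ))
        * (starRingEnd ℂ) (Complex.exp (Complex.I * ((c : ℝ) : ℂ) * (W x' z : ℝ))))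
      =ᵐ[μ] fun z => Complex.exp (Complex.I * (W (c • (x - x')) z : ℝ)) := by
    filter_upwards [h2] with z hz
    rw [← Complex.exp_conj]
    rw [← Complex.exp_add]
    congr 1
    have : (starRingEnd ℂ) (Complex.I * (c : ℂ) * ((W x' z : ℝ) : ℂ))
        = -(Complex.I * (c : ℂ) * ((W x' z : ℝ) : ℂ)) := by
      rw [map_mul, map_mul, Complex.conj_I, Complex.conj_ofReal, Complex.conj_ofReal]
      ring
    rw [this, hz]
    push_cast
    ring
  rw [integral_congr_ae hintegrand, key (c • (x - x'))]
  -- compare the exponents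
  have hnorm : ‖c • (x - x')‖ ^ 2 = 2 / γ ^ 2 * ‖x - x'‖ ^ 2 := by
    rw [norm_smul, mul_pow, Real.norm_eq_abs, sq_abs, hc, div_pow, Real.sq_sqrt (by norm_num)]
  have hexp : -‖x - x'‖ ^ 2 / γ ^ 2 = -(‖c • (x - x')‖ ^ 2) / 2 := by
    rw [hnorm]; field_simp
  rw [Complex.ofReal_exp, hexp]
  congr 1
  push_cast
  ring
end

section
/- Let H be a separable real Hilbert space, Q ∈ L₁⁺(H) with ker(Q) = {0}, γ > 0, W the white noise mapping of N(0,Q), and g ∈ L²(H, N(0,Q); ℂ) with ‖g‖ ≤ 1. Define f(x) = Re ∫_H exp(-i√2/γ · W_x(z)) g(z) dN(z|0,Q). Then |f(x)| ≤ 1 for all x ∈ H, and f lies in the RKHS H_γ of the Gaussian kernel k_γ(x,x') = exp(-‖x-x'‖²/γ²) with ‖f‖_{H_γ} ≤ 1. -/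
open MeasureTheory
open scoped RealInnerProductSpace



private lemma exp_I_sub_one_bound (u : ℝ) :
    ‖Complex.exp ((u : ℂ) * Complex.I) - 1‖ ≤ |u| := by
  have h1 : Complex.exp ((u : ℂ) * Complex.I) - 1
      = ((Real.cos u - 1 : ℝ) : ℂ) + ((Real.sin u : ℝ) : ℂ) * Complex.I := by
    rw [Complex.exp_mul_I]
    push_cast
    ring
  have h2 : ‖Complex.exp ((u : ℂ) * Complex.I) - 1‖ ^ 2
      = (Real.cos u - 1) ^ 2 + Real.sin u ^ 2 := by
    rw [h1, Complex.sq_norm, Complex.normSq_add_mul_I]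
  have h3 : (Real.cos u - 1) ^ 2 + Real.sin u ^ 2 = 2 - 2 * Real.cos u := by
    have := Real.sin_sq_add_cos_sq u
    nlinarith
  have h4 : 2 - 2 * Real.cos u = 4 * Real.sin (u / 2) ^ 2 := by
    have hc := Real.cos_sq (u / 2)
    rw [show 2 * (u / 2) = u by ring] at hc
    have hsc := Real.sin_sq_add_cos_sq (u / 2)
    nlinarith
  have h5 : Real.sin (u / 2) ^ 2 ≤ (u / 2) ^ 2 := by
    have := Real.abs_sin_le_abs (x := u / 2)
    nlinarith [abs_nonneg (u/2), abs_nonneg (Real.sin (u/2)), sq_abs (u/2),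
      sq_abs (Real.sin (u/2))]
  have h6 : ‖Complex.exp ((u : ℂ) * Complex.I) - 1‖ ^ 2 ≤ |u| ^ 2 := by
    rw [h2, h3, h4, sq_abs]
    nlinarith
  calc ‖Complex.exp ((u : ℂ) * Complex.I) - 1‖
      = Real.sqrt (‖Complex.exp ((u : ℂ) * Complex.I) - 1‖ ^ 2) :=
        (Real.sqrt_sq (norm_nonneg _)).symm
    _ ≤ Real.sqrt (|u| ^ 2) := Real.sqrt_le_sqrt h6
    _ = |u| := Real.sqrt_sq (abs_nonneg _)

private lemma exp_I_lipschitz (t a b : ℝ) :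
    ‖Complex.exp (Complex.I * (t : ℂ) * (a : ℂ)) - Complex.exp (Complex.I * (t : ℂ) * (b : ℂ))‖
      ≤ |t| * |a - b| := by
  have h1 : Complex.exp (Complex.I * (t : ℂ) * (a : ℂ))
      - Complex.exp (Complex.I * (t : ℂ) * (b : ℂ))
      = Complex.exp (Complex.I * (t : ℂ) * (b : ℂ))
        * (Complex.exp (((t * (a - b) : ℝ) : ℂ) * Complex.I) - 1) := by
    rw [mul_sub, ← Complex.exp_add, mul_one]
    push_cast
    ring_nf
  rw [h1, norm_mul]
  have h2 : ‖Complex.exp (Complex.I * (t : ℂ) * (b : ℂ))‖ = 1 := by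
    rw [Complex.norm_exp]
    simp
  rw [h2, one_mul]
  calc ‖Complex.exp (((t * (a - b) : ℝ) : ℂ) * Complex.I) - 1‖ ≤ |t * (a - b)| :=
        exp_I_sub_one_bound _
    _ = |t| * |a - b| := abs_mul _ _

private lemma l1_le_sqrt_l2 {α : Type*} [MeasurableSpace α] {μ : Measure α}
    [IsProbabilityMeasure μ] {E : Type*} [NormedAddCommGroup E] {f : α → E}
    (hf : MemLp f 2 μ) :
    ∫ a, ‖f a‖ ∂μ ≤ Real.sqrt (∫ a, ‖f a‖ ^ 2 ∂μ) := by
  have h1 : MemLp f 1 μ := hf.mono_exponent one_le_two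
  have e1 : eLpNorm f 1 μ = ENNReal.ofReal (∫ a, ‖f a‖ ∂μ) := by
    rw [h1.eLpNorm_eq_integral_rpow_norm one_ne_zero ENNReal.one_ne_top]
    simp
  have e2 : eLpNorm f 2 μ = ENNReal.ofReal (Real.sqrt (∫ a, ‖f a‖ ^ 2 ∂μ)) := by
    rw [hf.eLpNorm_eq_integral_rpow_norm two_ne_zero ENNReal.ofNat_ne_top]
    congr 1
    rw [Real.sqrt_eq_rpow]
    norm_num
  have hmono : eLpNorm f 1 μ ≤ eLpNorm f 2 μ :=
    eLpNorm_le_eLpNorm_of_exponent_le one_le_two hf.aestronglyMeasurable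
  rw [e1, e2] at hmono
  exact le_trans (le_of_eq rfl)
    ((ENNReal.ofReal_le_ofReal_iff (Real.sqrt_nonneg _)).mp hmono)


private lemma lift_lemma {E F ι : Type*} [NormedAddCommGroup E] [InnerProductSpace ℝ E]
    [CompleteSpace E] [NormedAddCommGroup F] [InnerProductSpace ℝ F] [CompleteSpace F]
    (Φ : ι → E) (Ψ : ι → F) (hk : ∀ x y : ι, ⟪Φ x, Φ y⟫ = ⟪Ψ x, Ψ y⟫) (g : E) :
    ∃ fh : F, ‖fh‖ ≤ ‖g‖ ∧ ∀ x, ⟪fh, Ψ x⟫ = ⟪g, Φ x⟫ := by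
  classical
  let P := WithLp 2 (E × F)
  let e : ι → P := fun x => (WithLp.equiv 2 (E × F)).symm (Φ x, Ψ x)
  have he_fst : ∀ x, (e x).fst = Φ x := fun _ => rfl
  have he_snd : ∀ x, (e x).snd = Ψ x := fun _ => rfl
  set G : Submodule ℝ P := (Submodule.span ℝ (Set.range e)).topologicalClosure with hGdef
  have hGclosed : IsClosed (G : Set P) := Submodule.isClosed_topologicalClosure _
  have hcont_fst : Continuous fun v : P => v.fst :=
    (continuous_fst).comp (WithLp.prodContinuousLinearEquiv 2 ℝ E F).continuous
  have hcont_snd : Continuous fun v : P => v.snd :=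
    (continuous_snd).comp (WithLp.prodContinuousLinearEquiv 2 ℝ E F).continuous
  -- Claim A
  have claimA : ∀ u ∈ G, ∀ x, ⟪u.fst, Φ x⟫ = ⟪u.snd, Ψ x⟫ := by
    intro u hu x
    have hcl : IsClosed {v : P | ⟪v.fst, Φ x⟫ = ⟪v.snd, Ψ x⟫} :=
      isClosed_eq (hcont_fst.inner continuous_const) (hcont_snd.inner continuous_const)
    have hspan : (Submodule.span ℝ (Set.range e) : Set P)
        ⊆ {v : P | ⟪v.fst, Φ x⟫ = ⟪v.snd, Ψ x⟫} := by
      intro v hv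
      induction hv using Submodule.span_induction with
      | mem w hw =>
        obtain ⟨y, rfl⟩ := hw
        simpa [he_fst, he_snd] using hk y x
      | zero =>
        show (⟪((0 : P)).fst, Φ x⟫ : ℝ) = ⟪((0 : P)).snd, Ψ x⟫
        rw [show ((0:P)).fst = (0 : E) from rfl, show ((0:P)).snd = (0 : F) from rfl]
        simp
      | add a b ha hb iha ihb =>
        show (⟪(a + b).fst, Φ x⟫ : ℝ) = ⟪(a + b).snd, Ψ x⟫
        rw [show (a + b).fst = a.fst + b.fst from rfl, show (a + b).snd = a.snd + b.snd from rfl,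
          inner_add_left, inner_add_left, iha, ihb]
      | smul c a ha iha =>
        show (⟪(c • a).fst, Φ x⟫ : ℝ) = ⟪(c • a).snd, Ψ x⟫
        rw [show (c • a).fst = c • a.fst from rfl, show (c • a).snd = c • a.snd from rfl,
          real_inner_smul_left, real_inner_smul_left, iha]
    refine closure_minimal hspan hcl ?_
    rw [← Submodule.topologicalClosure_coe]
    exact hu
  -- Claim B
  have claimB : ∀ u ∈ G, ∀ w ∈ G, ⟪u.fst, w.fst⟫ = ⟪u.snd, w.snd⟫ := by
    intro u hu w hw
    have hcl : IsClosed {v : P | ⟪u.fst, v.fst⟫ = ⟪u.snd, v.snd⟫} :=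
      isClosed_eq ((continuous_const).inner hcont_fst) ((continuous_const).inner hcont_snd)
    have hspan : (Submodule.span ℝ (Set.range e) : Set P)
        ⊆ {v : P | ⟪u.fst, v.fst⟫ = ⟪u.snd, v.snd⟫} := by
      intro v hv
      induction hv using Submodule.span_induction with
      | mem w hw =>
        obtain ⟨y, rfl⟩ := hw
        have := claimA u hu y
        simpa [he_fst, he_snd, real_inner_comm] using this
      | zero =>
        show (⟪u.fst, ((0 : P)).fst⟫ : ℝ) = ⟪u.snd, ((0 : P)).snd⟫
        rw [show ((0:P)).fst = (0 : E) from rfl, show ((0:P)).snd = (0 : F) from rfl]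
        simp
      | add a b ha hb iha ihb =>
        show (⟪u.fst, (a + b).fst⟫ : ℝ) = ⟪u.snd, (a + b).snd⟫
        rw [show (a + b).fst = a.fst + b.fst from rfl, show (a + b).snd = a.snd + b.snd from rfl,
          inner_add_right, inner_add_right, iha, ihb]
      | smul c a ha iha =>
        show (⟪u.fst, (c • a).fst⟫ : ℝ) = ⟪u.snd, (c • a).snd⟫
        rw [show (c • a).fst = c • a.fst from rfl, show (c • a).snd = c • a.snd from rfl,
          real_inner_smul_right, real_inner_smul_right, iha]
    refine closure_minimal hspan hcl ?_
    rw [← Submodule.topologicalClosure_coe]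
    exact hw
  have claimC : ∀ u ∈ G, ‖u.fst‖ = ‖u.snd‖ := by
    intro u hu
    have h := claimB u hu u hu
    rw [real_inner_self_eq_norm_sq, real_inner_self_eq_norm_sq] at h
    calc ‖u.fst‖ = Real.sqrt (‖u.fst‖ ^ 2) := (Real.sqrt_sq (norm_nonneg _)).symm
      _ = Real.sqrt (‖u.snd‖ ^ 2) := by rw [h]
      _ = ‖u.snd‖ := Real.sqrt_sq (norm_nonneg _)
  -- the isometry G → E, u ↦ √2 • u.fst
  haveI : CompleteSpace G := hGclosed.completeSpace_coe
  let T : G →ₗ[ℝ] E :=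
    { toFun := fun u => (Real.sqrt 2 : ℝ) • ((u : P).fst)
      map_add' := by
        intro u v
        show Real.sqrt 2 • (((u : P) + (v : P))).fst = _
        rw [show ((u : P) + (v : P)).fst = (u : P).fst + (v : P).fst from rfl, smul_add]
      map_smul' := by
        intro c u
        show Real.sqrt 2 • ((c • (u : P))).fst = c • (Real.sqrt 2 • (u : P).fst)
        rw [show (c • (u : P)).fst = c • (u : P).fst from rfl, smul_comm] }
  have hTnorm : ∀ u : G, ‖T u‖ = ‖u‖ := by
    intro u
    have h2 : ‖(u : P)‖ ^ 2 = ‖(u : P).fst‖ ^ 2 + ‖(u : P).snd‖ ^ 2 :=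
      WithLp.prod_norm_sq_eq_of_L2 _
    have hC : ‖(u : P).fst‖ = ‖(u : P).snd‖ := claimC _ u.2
    have hT : ‖T u‖ = Real.sqrt 2 * ‖(u : P).fst‖ := by
      simp only [T, LinearMap.coe_mk, AddHom.coe_mk, norm_smul, Real.norm_eq_abs,
        abs_of_nonneg (Real.sqrt_nonneg 2)]
    have hsq : ‖T u‖ ^ 2 = ‖(u : P)‖ ^ 2 := by
      rw [hT, h2, ← hC, mul_pow, Real.sq_sqrt (by norm_num : (0:ℝ) ≤ 2)]
      ring
    calc ‖T u‖ = Real.sqrt (‖T u‖ ^ 2) := (Real.sqrt_sq (norm_nonneg _)).symm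
      _ = Real.sqrt (‖(u : P)‖ ^ 2) := by rw [hsq]
      _ = ‖u‖ := Real.sqrt_sq (norm_nonneg _)
  let J : G →ₗᵢ[ℝ] E := ⟨T, hTnorm⟩
  have hKclosed : IsClosed (Set.range J) := J.isometry.isClosedEmbedding.isClosed_range
  let K : Submodule ℝ E := LinearMap.range J.toLinearMap
  have hKcoe : (K : Set E) = Set.range J := by
    ext v; simp [K, LinearMap.mem_range]
  have hKclosed' : IsClosed (K : Set E) := by rw [hKcoe]; exact hKclosed
  -- Φ x ∈ K
  have hΦK : ∀ x, Φ x ∈ K := by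
    intro x
    have hex : e x ∈ G :=
      (Submodule.le_topologicalClosure _) (Submodule.subset_span ⟨x, rfl⟩)
    refine ⟨(Real.sqrt 2 : ℝ)⁻¹ • (⟨e x, hex⟩ : G), ?_⟩
    have hs2 : (Real.sqrt 2 : ℝ) ≠ 0 := by positivity
    show (Real.sqrt 2 : ℝ) • (((Real.sqrt 2 : ℝ)⁻¹ • (⟨e x, hex⟩ : G) : G) : P).fst = Φ x
    rw [Submodule.coe_smul, WithLp.smul_fst, smul_smul, mul_inv_cancel₀ hs2, one_smul, he_fst]
  let D : Submodule ℝ E := (Submodule.span ℝ (Set.range Φ)).topologicalClosure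
  haveI : CompleteSpace D := (Submodule.isClosed_topologicalClosure _).completeSpace_coe
  have hDK : D ≤ K := by
    apply Submodule.topologicalClosure_minimal
    · rw [Submodule.span_le]
      rintro v ⟨x, rfl⟩
      exact hΦK x
    · exact hKclosed'
  set a : D := D.orthogonalProjectionOnto g with ha
  obtain ⟨u, hu⟩ : ∃ u : G, J u = (a : E) := hDK a.2
  set fh : F := ((u : P)).snd
  have hufst : (u : P).fst = (Real.sqrt 2 : ℝ)⁻¹ • (a : E) := by
    have hs2 : (Real.sqrt 2 : ℝ) ≠ 0 := by positivity
    have : (Real.sqrt 2 : ℝ) • (u : P).fst = (a : E) := hu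
    rw [← this, smul_smul, inv_mul_cancel₀ hs2, one_smul]
  refine ⟨(Real.sqrt 2 : ℝ) • fh, ?_, ?_⟩
  · have h1 : ‖(Real.sqrt 2 : ℝ) • fh‖ = Real.sqrt 2 * ‖fh‖ := by
      rw [norm_smul, Real.norm_eq_abs, abs_of_nonneg (Real.sqrt_nonneg 2)]
    have h2 : ‖fh‖ = ‖(u : P).fst‖ := (claimC _ u.2).symm
    have h3 : Real.sqrt 2 * ‖(u : P).fst‖ = ‖(a : E)‖ := by
      rw [hufst, norm_smul, Real.norm_eq_abs, abs_of_nonneg (by positivity),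
        ← mul_assoc, mul_inv_cancel₀ (by positivity : (Real.sqrt 2 : ℝ) ≠ 0), one_mul]
    have h4 : ‖(a : E)‖ ≤ ‖g‖ := by
      have h5 := (D.orthogonalProjectionOnto).le_opNorm g
      have h6 := Submodule.orthogonalProjectionOnto_norm_le D
      have h7 : ‖(a : E)‖ = ‖a‖ := rfl
      rw [h7, ha]
      nlinarith [norm_nonneg g]
    calc ‖(Real.sqrt 2 : ℝ) • fh‖ = ‖(a : E)‖ := by rw [h1, h2, h3]
      _ ≤ ‖g‖ := h4
  · intro x
    have hA := claimA _ u.2 x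
    have hΦD : Φ x ∈ D :=
      (Submodule.le_topologicalClosure _) (Submodule.subset_span ⟨x, rfl⟩)
    have horth : ⟪g - (a : E), Φ x⟫ = 0 := by
      rw [real_inner_comm]
      exact (Submodule.sub_starProjection_mem_orthogonal (K := D) g) (Φ x) hΦD
    have hga : ⟪g, Φ x⟫ = ⟪(a : E), Φ x⟫ := by
      have h8 := inner_sub_left (𝕜 := ℝ) g (a : E) (Φ x)
      rw [horth] at h8
      linarith [h8.symm]
    have hA' : (⟪fh, Ψ x⟫ : ℝ) = (Real.sqrt 2)⁻¹ * ⟪(a : E), Φ x⟫ := by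
      rw [← hA, hufst, real_inner_smul_left]
    rw [real_inner_smul_left, hA', hga, ← mul_assoc,
      mul_inv_cancel₀ (by positivity : (Real.sqrt 2 : ℝ) ≠ 0), one_mul]
/-- Let `W` be the white noise mapping of the centered Gaussian measure `N(0,Q)`
(`Q` positive self-adjoint trace-class with trivial kernel, square root `R`) on a
separable real Hilbert space `H`, let `γ > 0`, and let `g ∈ L²(H,N(0,Q);ℂ)` with
`‖g‖ ≤ 1`. Then `f(x) = Re ∫ exp(-i√2/γ W_x(z)) g(z) dN(z|0,Q)` satisfies
`|f(x)| ≤ 1` for all `x`, and `f` lies in the RKHS `H_γ` of the Gaussian kernel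
`k_γ` with `‖f‖_{H_γ} ≤ 1`. The RKHS is represented by a Hilbert space `Hγ`
together with its canonical feature map `Φγ` (so `k_γ(x,x') = ⟨Φγ x', Φγ x⟩` and
the span of the range of `Φγ` is dense), elements acting as functions via
`fh(x) = ⟨fh, Φγ x⟩`. -/
theorem stmt_19
    {H : Type*} [NormedAddCommGroup H] [InnerProductSpace ℝ H] [CompleteSpace H]
    [TopologicalSpace.SeparableSpace H] [MeasurableSpace H] [BorelSpace H]
    {Hγ : Type*} [NormedAddCommGroup Hγ] [InnerProductSpace ℝ Hγ] [CompleteSpace Hγ]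
    (Q R : H →L[ℝ] H)
    (hQsa : IsSelfAdjoint Q)
    (hQpos : ∀ x : H, 0 ≤ ⟪x, Q x⟫)
    (hQtrace : ∃ (ι : Type) (b : HilbertBasis ι ℝ H), Summable fun i => ⟪b i, Q (b i)⟫)
    (hQker : LinearMap.ker (Q : H →ₗ[ℝ] H) = ⊥)
    (hRsa : IsSelfAdjoint R)
    (hRpos : ∀ x : H, 0 ≤ ⟪x, R x⟫)
    (hRR : ∀ x : H, R (R x) = Q x)
    (μ : Measure H) [IsProbabilityMeasure μ]
    (hFourier : ∀ u : H,
      ∫ x, Complex.exp (Complex.I * (⟪u, x⟫ : ℝ)) ∂μ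
        = Complex.exp (-((⟪Q u, u⟫ : ℝ) : ℂ) / 2))
    (W : H → H → ℝ)
    (hWmem : ∀ h : H, MemLp (W h) 2 μ)
    (hWlin : ∀ (a : ℝ) (h₁ h₂ : H),
      (fun x => W (a • h₁ + h₂) x) =ᵐ[μ] fun x => a * W h₁ x + W h₂ x)
    (hWiso : ∀ h₁ h₂ : H, ∫ x, (W h₁ x - W h₂ x) ^ 2 ∂μ = ‖h₁ - h₂‖ ^ 2)
    (hWrange : ∀ h₀ : H, (fun x => W (R h₀) x) =ᵐ[μ] fun x => ⟪h₀, x⟫)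
    (γ : ℝ) (hγ : 0 < γ)
    -- the RKHS of the Gaussian kernel k_γ, via its canonical feature map:
    (Φγ : H → Hγ)
    (hΦγ : ∀ x x' : H, Real.exp (-‖x - x'‖ ^ 2 / γ ^ 2) = ⟪Φγ x', Φγ x⟫)
    (hdense : Dense ((Submodule.span ℝ (Set.range Φγ) : Submodule ℝ Hγ) : Set Hγ))
    (g : H → ℂ) (hg : MemLp g 2 μ) (hgnorm : ∫ z, ‖g z‖ ^ 2 ∂μ ≤ 1)
    (f : H → ℝ)
    (hf : ∀ x : H, f x =
      (∫ z, Complex.exp (-(Complex.I * ((Real.sqrt 2 / γ : ℝ) : ℂ) * (W x z : ℝ)))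
          * g z ∂μ).re) :
    (∀ x : H, |f x| ≤ 1) ∧
    ∃ fh : Hγ, ‖fh‖ ≤ 1 ∧ ∀ x : H, ⟪fh, Φγ x⟫ = f x := by
  set s : ℝ := Real.sqrt 2 / γ with hs
  set e : H → H → ℂ := fun h z => Complex.exp (Complex.I * (s : ℂ) * ((W h z : ℝ) : ℂ))
    with he_def
  have hs2 : s ^ 2 = 2 / γ ^ 2 := by
    rw [hs, div_pow, Real.sq_sqrt (by norm_num : (0:ℝ) ≤ 2)]
  -- basic facts about `e`
  have he_norm : ∀ (h : H) (z : H), ‖e h z‖ = 1 := by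
    intro h z
    rw [he_def]
    simp [Complex.norm_exp]
  have he_meas : ∀ h : H, AEStronglyMeasurable (e h) μ := by
    intro h
    have hc : Continuous fun r : ℝ => Complex.exp (Complex.I * (s : ℂ) * (r : ℂ)) := by
      fun_prop
    exact hc.comp_aestronglyMeasurable (hWmem h).aestronglyMeasurable
  have he_int : ∀ h : H, Integrable (e h) μ := by
    intro h
    refine Integrable.mono' (integrable_const (1:ℝ)) (he_meas h) ?_
    exact Filter.Eventually.of_forall fun z => le_of_eq (he_norm h z)
  have he_mem : ∀ h : H, MemLp (e h) 2 μ := by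
    intro h
    refine MemLp.mono_exponent ?_ le_top
    exact memLp_top_of_bound (he_meas h) 1
      (Filter.Eventually.of_forall fun z => le_of_eq (he_norm h z))
  have hconj : ∀ (h : H) (z : H),
      (starRingEnd ℂ) (e h z) = Complex.exp (-(Complex.I * (s : ℂ) * ((W h z : ℝ) : ℂ))) := by
    intro h z
    rw [he_def, ← Complex.exp_conj]
    congr 1
    simp [map_mul, Complex.conj_ofReal]
  -- characteristic function of W h
  have charW : ∀ h : H, ∫ z, e h z ∂μ = ((Real.exp (-(s ^ 2 * ‖h‖ ^ 2) / 2) : ℝ) : ℂ) := by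
    have hRsym := ContinuousLinearMap.isSelfAdjoint_iff_isSymmetric.mp hRsa
    -- the range of R is dense
    have hMdense : Dense (Set.range (R : H → H)) := by
      have hM : (LinearMap.range (R : H →ₗ[ℝ] H))ᗮ = ⊥ := by
        rw [Submodule.eq_bot_iff]
        intro y hy
        have h1 : ∀ x : H, (⟪x, R y⟫ : ℝ) = 0 := by
          intro x
          have h2 : (⟪(R : H →ₗ[ℝ] H) x, y⟫ : ℝ) = 0 :=
            (Submodule.mem_orthogonal _ y).mp hy (R x) (LinearMap.mem_range_self _ x)
          rw [hRsym x y] at h2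
          exact h2
        have h2 : R y = 0 := by
          have := h1 (R y)
          rwa [inner_self_eq_zero (𝕜 := ℝ)] at this
        have h3 : Q y = 0 := by
          rw [← hRR, h2, map_zero]
        have h4 : y ∈ LinearMap.ker (Q : H →ₗ[ℝ] H) := LinearMap.mem_ker.mpr h3
        rw [hQker] at h4
        exact h4
      have h4 : (LinearMap.range (R : H →ₗ[ℝ] H)).topologicalClosure = ⊤ :=
        Submodule.topologicalClosure_eq_top_iff.mpr hM
      have h5 : Dense ((LinearMap.range (R : H →ₗ[ℝ] H) : Submodule ℝ H) : Set H) :=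
        Submodule.dense_iff_topologicalClosure_eq_top.mpr h4
      rwa [LinearMap.coe_range] at h5
    -- the two sides as functions of h
    set φ : H → ℂ := fun h => ∫ z, e h z ∂μ with hφ
    set ψ : H → ℂ := fun h => ((Real.exp (-(s ^ 2 * ‖h‖ ^ 2) / 2) : ℝ) : ℂ) with hψ
    have hlip : ∀ h₁ h₂ : H, dist (φ h₁) (φ h₂) ≤ |s| * dist h₁ h₂ := by
      intro h₁ h₂
      rw [dist_eq_norm, dist_eq_norm]
      have hWd : MemLp (fun z => W h₁ z - W h₂ z) 2 μ := (hWmem h₁).sub (hWmem h₂)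
      calc ‖φ h₁ - φ h₂‖ = ‖∫ z, (e h₁ z - e h₂ z) ∂μ‖ := by
            rw [hφ, integral_sub (he_int h₁) (he_int h₂)]
        _ ≤ ∫ z, ‖e h₁ z - e h₂ z‖ ∂μ := norm_integral_le_integral_norm _
        _ ≤ ∫ z, |s| * |W h₁ z - W h₂ z| ∂μ := by
            refine integral_mono ((he_int h₁).sub (he_int h₂)).norm ?_ ?_
            · exact ((hWd.integrable one_le_two).abs.const_mul _)
            · intro z
              exact exp_I_lipschitz s (W h₁ z) (W h₂ z)
        _ = |s| * ∫ z, |W h₁ z - W h₂ z| ∂μ := integral_const_mul _ _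
        _ ≤ |s| * Real.sqrt (∫ z, (W h₁ z - W h₂ z) ^ 2 ∂μ) := by
            refine mul_le_mul_of_nonneg_left ?_ (abs_nonneg s)
            have := l1_le_sqrt_l2 (μ := μ) (f := fun z => W h₁ z - W h₂ z) hWd
            simpa [Real.norm_eq_abs, sq_abs] using this
        _ = |s| * ‖h₁ - h₂‖ := by rw [hWiso h₁ h₂, Real.sqrt_sq (norm_nonneg _)]
    have cont1 : Continuous φ := by
      have : LipschitzWith ⟨|s|, abs_nonneg s⟩ φ :=
        LipschitzWith.of_dist_le_mul fun h₁ h₂ => hlip h₁ h₂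
      exact this.continuous
    have cont2 : Continuous ψ := by
      rw [hψ]
      fun_prop
    have heqOn : Set.EqOn φ ψ (Set.range (R : H → H)) := by
      rintro _ ⟨h₀, rfl⟩
      have hae : (fun z => e (R h₀) z)
          =ᵐ[μ] fun z => Complex.exp (Complex.I * ((⟪s • h₀, z⟫ : ℝ) : ℂ)) := by
        filter_upwards [hWrange h₀] with z hz
        rw [he_def]
        simp only
        rw [hz, real_inner_smul_left]
        push_cast
        ring_nf
      have h6 : φ (R h₀) = ∫ z, Complex.exp (Complex.I * ((⟪s • h₀, z⟫ : ℝ) : ℂ)) ∂μ :=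
        integral_congr_ae hae
      rw [h6, hFourier (s • h₀)]
      have h7 : (⟪Q (s • h₀), s • h₀⟫ : ℝ) = s ^ 2 * ‖R h₀‖ ^ 2 := by
        rw [Q.map_smul, real_inner_smul_left, real_inner_smul_right]
        have h8 : (⟪Q h₀, h₀⟫ : ℝ) = ‖R h₀‖ ^ 2 :=
          calc (⟪Q h₀, h₀⟫ : ℝ) = ⟪R (R h₀), h₀⟫ := by rw [hRR]
            _ = ⟪R h₀, R h₀⟫ := hRsym (R h₀) h₀
            _ = ‖R h₀‖ ^ 2 := real_inner_self_eq_norm_sq _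
        rw [h8]
        ring
      rw [h7]
      simp only [hψ]
      rw [Complex.ofReal_exp]
      congr 1
      push_cast
      ring
    have := Continuous.ext_on hMdense cont1 cont2 heqOn
    intro h
    exact congrFun this h
  -- the feature map in L²(μ; ℂ)
  set ΦL : H → Lp ℂ 2 μ := fun x => (he_mem x).toLp (e x) with hΦL
  set gL : Lp ℂ 2 μ := hg.toLp g with hgL
  have hinnerC : ∀ x x' : H,
      (inner ℂ (ΦL x') (ΦL x) : ℂ) = ((Real.exp (-‖x - x'‖ ^ 2 / γ ^ 2) : ℝ) : ℂ) := by
    intro x x'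
    rw [MeasureTheory.L2.inner_def]
    have hae : (fun z => (inner ℂ ((ΦL x') z) ((ΦL x) z) : ℂ)) =ᵐ[μ] fun z => e (x - x') z := by
      filter_upwards [MemLp.coeFn_toLp (he_mem x'), MemLp.coeFn_toLp (he_mem x),
        hWlin (-1) x' x] with z hz' hz hlin
      rw [RCLike.inner_apply, hΦL] at *
      rw [hz, hz', hconj, he_def]
      simp only
      rw [← Complex.exp_add]
      have hx : (-1 : ℝ) • x' + x = x - x' := by
        rw [neg_one_smul]
        abel
      rw [hx] at hlin
      rw [hlin]
      push_cast
      ring_nf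
    rw [integral_congr_ae hae, charW (x - x')]
    congr 1
    rw [hs2]
    have hγ2 : γ ^ 2 ≠ 0 := by positivity
    field_simp
  -- the real inner product on L² is the real part of the complex one
  have hre : ∀ F1 F2 : Lp ℂ 2 μ, (⟪F1, F2⟫ : ℝ) = (inner ℂ F1 F2 : ℂ).re := by
    intro F1 F2
    have hint := MeasureTheory.L2.integrable_inner (𝕜 := ℂ) F1 F2
    calc (⟪F1, F2⟫ : ℝ) = ∫ a, (⟪F1 a, F2 a⟫ : ℝ) ∂μ := MeasureTheory.L2.inner_def F1 F2
      _ = ∫ a, RCLike.re (inner ℂ (F1 a) (F2 a) : ℂ) ∂μ :=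
          integral_congr_ae (Filter.Eventually.of_forall fun a => rfl)
      _ = RCLike.re (∫ a, (inner ℂ (F1 a) (F2 a) : ℂ) ∂μ) := integral_re hint
      _ = (inner ℂ F1 F2 : ℂ).re := by
          rw [← MeasureTheory.L2.inner_def F1 F2]
          rfl
  have hkreal : ∀ a b : H, (⟪ΦL a, ΦL b⟫ : ℝ) = ⟪Φγ a, Φγ b⟫ := by
    intro a b
    rw [hre, hinnerC b a, Complex.ofReal_re, hΦγ b a]
  -- ‖gL‖ ≤ 1
  have hgL1 : ‖gL‖ ≤ 1 := by
    rw [hgL, Lp.norm_toLp g hg, hg.eLpNorm_eq_integral_rpow_norm two_ne_zero ENNReal.ofNat_ne_top,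
      ENNReal.toReal_ofReal (by positivity)]
    refine Real.rpow_le_one (by positivity) ?_ (by positivity)
    have h9 : ∫ z, ‖g z‖ ^ ((2 : ENNReal).toReal) ∂μ = ∫ z, ‖g z‖ ^ 2 ∂μ := by
      refine integral_congr_ae (Filter.Eventually.of_forall fun z => ?_)
      norm_num
    rw [h9]
    exact hgnorm
  -- f x = ⟪gL, ΦL x⟫_ℝ
  have hfx : ∀ x : H, f x = (⟪gL, ΦL x⟫ : ℝ) := by
    intro x
    rw [hre, ← inner_conj_symm gL (ΦL x), Complex.conj_re]
    rw [MeasureTheory.L2.inner_def, hf x]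
    congr 1
    refine integral_congr_ae ?_
    filter_upwards [MemLp.coeFn_toLp (he_mem x), MemLp.coeFn_toLp hg] with z hz hzg
    rw [RCLike.inner_apply, hΦL] at *
    rw [hz, hzg, hconj]
    ring
  constructor
  · -- |f x| ≤ 1
    intro x
    rw [hf x]
    calc |(∫ z, Complex.exp (-(Complex.I * ((s : ℝ) : ℂ) * ((W x z : ℝ) : ℂ))) * g z ∂μ).re|
        ≤ ‖∫ z, Complex.exp (-(Complex.I * ((s : ℝ) : ℂ) * ((W x z : ℝ) : ℂ))) * g z ∂μ‖ :=
          Complex.abs_re_le_norm _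
      _ ≤ ∫ z, ‖Complex.exp (-(Complex.I * ((s : ℝ) : ℂ) * ((W x z : ℝ) : ℂ))) * g z‖ ∂μ :=
          norm_integral_le_integral_norm _
      _ = ∫ z, ‖g z‖ ∂μ := by
          refine integral_congr_ae (Filter.Eventually.of_forall fun z => ?_)
          simp only [norm_mul]
          have h10 : ‖Complex.exp (-(Complex.I * ((s : ℝ) : ℂ) * ((W x z : ℝ) : ℂ)))‖ = 1 := by
            rw [← hconj x z, RCLike.norm_conj, he_norm]
          rw [h10, one_mul]
      _ ≤ Real.sqrt (∫ z, ‖g z‖ ^ 2 ∂μ) := l1_le_sqrt_l2 hg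
      _ ≤ 1 := by
          calc Real.sqrt (∫ z, ‖g z‖ ^ 2 ∂μ) ≤ Real.sqrt 1 := Real.sqrt_le_sqrt hgnorm
            _ = 1 := Real.sqrt_one
  · -- the RKHS part
    obtain ⟨fh, hfh1, hfh2⟩ := lift_lemma ΦL Φγ hkreal gL
    refine ⟨fh, le_trans hfh1 hgL1, fun x => ?_⟩
    rw [hfh2 x, ← hfx x]
end
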